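/- Let N be a positive integer, let G be a subgroup of GL₂(ℤ/Nℤ), let Φ be a cyclic subgroup of order N of (ℤ/Nℤ)², and let B = #{gΦ : g ∈ G} be the cardinality of the orbit of Φ under the action of G on subgroups of (ℤ/Nℤ)². Then ψ(N)/B ≤ [GL₂(ℤ/Nℤ) : G], i.e. ψ(N) ≤ B · [GL₂(ℤ/Nℤ) : G]. -/

import Mathlib

open Real Matrix

/-- The Dedekind psi function `ψ(N) = N · ∏_{p | N prime} (1 + 1/p)`. -/
noncomputable def dedekindPsi (N : ℕ) : ℝ :=
  (N : ℝ) * ∏ p ∈ N.primeFactors, (1 + 1 / (p : ℝ))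

-- order of any vector divides n
lemma myOrdDvd (n : ℕ) (v : Fin 2 → ZMod n) : addOrderOf v ∣ n := by
  apply addOrderOf_dvd_of_nsmul_eq_zero
  funext i
  show n • v i = 0
  simp [nsmul_eq_mul, ZMod.natCast_self]

lemma natPPdvd {p k : ℕ} (hp : p.Prime) (hk : 0 < k) (m : ℕ) :
    p ^ k ∣ p ^ (k - 1) * m ↔ p ∣ m := by
  have hk' : p ^ k = p ^ (k - 1) * p := by
    rw [← pow_succ, Nat.sub_add_cancel hk]
  rw [hk', Nat.mul_dvd_mul_iff_left (pow_pos hp.pos (k-1))]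

-- characterization at prime powers
lemma myOrdPP {p k : ℕ} (hp : p.Prime) (hk : 0 < k) (v : Fin 2 → ZMod (p ^ k)) :
    addOrderOf v = p ^ k ↔ (IsUnit (v 0) ∨ IsUnit (v 1)) := by
  haveI : NeZero (p ^ k) := ⟨(pow_pos hp.pos k).ne'⟩
  have hdvd := myOrdDvd (p ^ k) v
  have hchar : ∀ x : ZMod (p ^ k), (p ^ (k - 1) • x = 0 ↔ ¬ IsUnit x) := by
    intro x
    have hx : x = ((x.val : ℕ) : ZMod (p ^ k)) := by
      rw [ZMod.natCast_val, ZMod.cast_id]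
    constructor
    · intro h hu
      rw [hx] at h hu
      rw [ZMod.isUnit_iff_coprime] at hu
      rw [Nat.coprime_pow_right_iff hk, Nat.coprime_comm, hp.coprime_iff_not_dvd] at hu
      apply hu
      rw [nsmul_eq_mul, ← Nat.cast_mul, ZMod.natCast_eq_zero_iff] at h
      exact (natPPdvd hp hk x.val).1 h
    · intro hu
      rw [hx] at hu ⊢
      rw [ZMod.isUnit_iff_coprime, Nat.coprime_pow_right_iff hk, Nat.coprime_comm,
        hp.coprime_iff_not_dvd, not_not] at hu
      rw [nsmul_eq_mul, ← Nat.cast_mul, ZMod.natCast_eq_zero_iff]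
      exact (natPPdvd hp hk x.val).2 hu
  constructor
  · intro h
    by_contra hc
    push_neg at hc
    have hz : p ^ (k - 1) • v = 0 := by
      funext i
      show p ^ (k-1) • v i = 0
      fin_cases i
      · exact (hchar (v 0)).2 hc.1
      · exact (hchar (v 1)).2 hc.2
    have := addOrderOf_dvd_of_nsmul_eq_zero hz
    rw [h] at this
    have hle := Nat.le_of_dvd (pow_pos hp.pos _) this
    have : p ^ (k - 1) < p ^ k := Nat.pow_lt_pow_right hp.one_lt (Nat.sub_lt hk one_pos)
    omega
  · intro h
    obtain ⟨j, hj, hje⟩ := (Nat.dvd_prime_pow hp).1 hdvd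
    rcases Nat.lt_or_ge j k with hjk | hjk
    · exfalso
      have hdvd' : addOrderOf v ∣ p ^ (k - 1) := by
        rw [hje]
        exact pow_dvd_pow p (by omega)
      rw [addOrderOf_dvd_iff_nsmul_eq_zero] at hdvd'
      rcases h with h | h
      · exact (hchar (v 0)).1 (congrFun hdvd' 0) h
      · exact (hchar (v 1)).1 (congrFun hdvd' 1) h
    · rw [hje]; congr 1; omega

noncomputable def myUnitsEquiv (M : Type*) [Monoid M] : Mˣ ≃ {x : M // IsUnit x} where
  toFun u := ⟨u, u.isUnit⟩
  invFun x := x.2.unit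
  left_inv u := Units.ext u.isUnit.unit_spec
  right_inv x := Subtype.ext x.2.unit_spec

-- count of non-units in ZMod n
lemma cardNonUnits {n : ℕ} (hn : 0 < n) :
    Nat.card {x : ZMod n // ¬ IsUnit x} = n - n.totient := by
  haveI : NeZero n := ⟨hn.ne'⟩
  rw [Nat.card_eq_fintype_card, Fintype.card_subtype_compl]
  congr 1
  · exact ZMod.card n
  · rw [← ZMod.card_units_eq_totient n]
    exact (Fintype.card_congr (myUnitsEquiv (ZMod n))).symm

lemma cardPP {p k : ℕ} (hp : p.Prime) (hk : 0 < k) :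
    Nat.card {v : Fin 2 → ZMod (p ^ k) // addOrderOf v = p ^ k}
      = (p ^ k) ^ 2 - (p ^ (k - 1)) ^ 2 := by
  classical
  haveI : NeZero (p ^ k) := ⟨(pow_pos hp.pos k).ne'⟩
  have hcong : Nat.card {v : Fin 2 → ZMod (p ^ k) // addOrderOf v = p ^ k}
      = Fintype.card {v : Fin 2 → ZMod (p ^ k) // IsUnit (v 0) ∨ IsUnit (v 1)} := by
    rw [Nat.card_eq_fintype_card]
    exact Fintype.card_congr (Equiv.subtypeEquivRight (fun v => myOrdPP hp hk v))
  rw [hcong]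
  have h1 : Fintype.card (Fin 2 → ZMod (p ^ k)) = (p ^ k) ^ 2 := by
    rw [Fintype.card_fun, ZMod.card]; norm_num
  have h2 : Fintype.card {v : Fin 2 → ZMod (p ^ k) // ¬ (IsUnit (v 0) ∨ IsUnit (v 1))}
      = (p ^ (k - 1)) ^ 2 := by
    have e1 : {v : Fin 2 → ZMod (p ^ k) // ¬ (IsUnit (v 0) ∨ IsUnit (v 1))}
        ≃ {v : Fin 2 → ZMod (p ^ k) // ∀ i, ¬ IsUnit (v i)} :=
      Equiv.subtypeEquivRight (fun v => by
        rw [not_or]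
        constructor
        · rintro ⟨h0, h1⟩ i; fin_cases i <;> assumption
        · intro h; exact ⟨h 0, h 1⟩)
    have e2 : {v : Fin 2 → ZMod (p ^ k) // ∀ i, ¬ IsUnit (v i)}
        ≃ (Fin 2 → {x : ZMod (p ^ k) // ¬ IsUnit x}) := Equiv.subtypePiEquivPi
        (β := fun _ : Fin 2 => ZMod (p ^ k)) (p := fun _ x => ¬ IsUnit x)
    rw [Fintype.card_congr (e1.trans e2), Fintype.card_fun]
    have : Fintype.card {x : ZMod (p ^ k) // ¬ IsUnit x} = p ^ (k - 1) := by
      rw [← Nat.card_eq_fintype_card, cardNonUnits (pow_pos hp.pos k),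
        Nat.totient_prime_pow hp hk]
      have hpk : p ^ k = p ^ (k - 1) * p := by rw [← pow_succ, Nat.sub_add_cancel hk]
      clear e1 e2 hcong h1
      obtain ⟨pm, rfl⟩ : ∃ pm, p = pm + 1 := ⟨p - 1, by have := hp.pos; omega⟩
      rw [hpk, Nat.add_sub_cancel, Nat.mul_add, Nat.mul_one]
      omega
    rw [this]; norm_num
  have h3 := Fintype.card_subtype_compl (fun v : Fin 2 → ZMod (p ^ k) => IsUnit (v 0) ∨ IsUnit (v 1))
  have h4 : Fintype.card {v : Fin 2 → ZMod (p ^ k) // IsUnit (v 0) ∨ IsUnit (v 1)}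
      ≤ Fintype.card (Fin 2 → ZMod (p ^ k)) := Fintype.card_subtype_le _
  rw [← h1, ← h2, h3, Nat.sub_sub_self h4]

lemma myLcmEq {a b d1 d2 : ℕ} (ha : 0 < a) (hb : 0 < b) (hco : a.Coprime b)
    (h1 : d1 ∣ a) (h2 : d2 ∣ b) : Nat.lcm d1 d2 = a * b ↔ d1 = a ∧ d2 = b := by
  constructor
  · intro h
    have hco' : d1.Coprime d2 :=
      Nat.Coprime.coprime_dvd_right h2 (Nat.Coprime.coprime_dvd_left h1 hco)
    rw [Nat.Coprime.lcm_eq_mul hco'] at h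
    obtain ⟨e, he⟩ := h1
    obtain ⟨f, hf⟩ := h2
    have hd1 : 0 < d1 := by
      rcases Nat.eq_zero_or_pos d1 with h0 | h0
      · subst h0; simp at he; omega
      · exact h0
    have hd2 : 0 < d2 := by
      rcases Nat.eq_zero_or_pos d2 with h0 | h0
      · subst h0; simp at hf; omega
      · exact h0
    have key : d1 * d2 * (e * f) = d1 * d2 * 1 := by
      calc d1 * d2 * (e * f) = (d1 * e) * (d2 * f) := by ring
        _ = a * b := by rw [← he, ← hf]
        _ = d1 * d2 * 1 := by rw [mul_one, h]
    have hef : e * f = 1 := Nat.eq_of_mul_eq_mul_left (by positivity) key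
    have he1 : e = 1 := Nat.eq_one_of_mul_eq_one_right hef
    have hf1 : f = 1 := Nat.eq_one_of_mul_eq_one_left hef
    constructor
    · rw [he, he1, mul_one]
    · rw [hf, hf1, mul_one]
  · rintro ⟨rfl, rfl⟩
    exact Nat.Coprime.lcm_eq_mul hco

lemma cardCoprime {a b : ℕ} (ha : 0 < a) (hb : 0 < b) (hco : a.Coprime b) :
    Nat.card {v : Fin 2 → ZMod (a * b) // addOrderOf v = a * b}
    = Nat.card {v : Fin 2 → ZMod a // addOrderOf v = a}
      * Nat.card {v : Fin 2 → ZMod b // addOrderOf v = b} := by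
  classical
  let c : ZMod (a * b) ≃+ ZMod a × ZMod b := (ZMod.chineseRemainder hco).toAddEquiv
  let E1 : (Fin 2 → ZMod (a * b)) ≃+ (Fin 2 → ZMod a × ZMod b) :=
    AddEquiv.piCongrRight (fun _ : Fin 2 => c)
  let E2 : (Fin 2 → ZMod a × ZMod b) ≃+ ((Fin 2 → ZMod a) × (Fin 2 → ZMod b)) :=
    { Equiv.arrowProdEquivProdArrow (Fin 2) (fun _ => ZMod a) (fun _ => ZMod b) with map_add' := fun f g => rfl }
  let E := E1.trans E2
  have step1 : Nat.card {v : Fin 2 → ZMod (a * b) // addOrderOf v = a * b}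
      = Nat.card {w : (Fin 2 → ZMod a) × (Fin 2 → ZMod b) // addOrderOf w = a * b} := by
    apply Nat.card_congr
    refine Equiv.subtypeEquiv E.toEquiv (fun v => ?_)
    rw [show addOrderOf (E.toEquiv v) = addOrderOf v from
      addOrderOf_injective E.toAddMonoidHom E.injective v]
  rw [step1]
  have step2 : Nat.card {w : (Fin 2 → ZMod a) × (Fin 2 → ZMod b) // addOrderOf w = a * b}
      = Nat.card {w : (Fin 2 → ZMod a) × (Fin 2 → ZMod b) //
          addOrderOf w.1 = a ∧ addOrderOf w.2 = b} := by
    apply Nat.card_congr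
    refine Equiv.subtypeEquivRight (fun w => ?_)
    have hw : addOrderOf w = Nat.lcm (addOrderOf w.1) (addOrderOf w.2) := by
      rw [← Prod.mk.eta (p := w), Prod.addOrderOf_mk]
    rw [hw]
    exact myLcmEq ha hb hco (myOrdDvd a w.1) (myOrdDvd b w.2)
  rw [step2, Nat.card_congr (Equiv.subtypeProdEquivProd
    (p := fun v : Fin 2 → ZMod a => addOrderOf v = a)
    (q := fun v : Fin 2 → ZMod b => addOrderOf v = b)), Nat.card_prod]

lemma psiMul {a b : ℕ} (ha : a ≠ 0) (hb : b ≠ 0) (hco : a.Coprime b) :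
    dedekindPsi (a * b) = dedekindPsi a * dedekindPsi b := by
  unfold dedekindPsi
  rw [Nat.primeFactors_mul ha hb, Finset.prod_union hco.disjoint_primeFactors]
  push_cast
  ring

lemma cardOrdEq : ∀ N : ℕ, 0 < N →
    (Nat.card {v : Fin 2 → ZMod N // addOrderOf v = N} : ℝ)
      = dedekindPsi N * (N.totient : ℝ) := by
  intro N
  induction N using Nat.recOnPosPrimePosCoprime with
  | prime_pow p k hpp hk =>
    intro _
    have hp' : p.Prime := hpp
    obtain ⟨j, rfl⟩ : ∃ j, k = j + 1 := ⟨k - 1, by omega⟩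
    rw [cardPP hp' hk]
    unfold dedekindPsi
    rw [Nat.primeFactors_prime_pow (by omega) hp', Finset.prod_singleton,
      Nat.totient_prime_pow hp' hk]
    have hsub : (j + 1) - 1 = j := by omega
    rw [hsub]
    have hle : (p ^ j) ^ 2 ≤ (p ^ (j + 1)) ^ 2 := by
      have : p ^ j ≤ p ^ (j+1) := Nat.pow_le_pow_right hp'.pos (by omega)
      exact Nat.pow_le_pow_left this 2
    have hp1 : (1 : ℕ) ≤ p := hp'.pos
    rw [Nat.cast_sub hle]
    push_cast [Nat.cast_sub hp1]
    have hpR : (0 : ℝ) < (p : ℝ) := by exact_mod_cast hp'.pos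
    field_simp
    ring
  | zero => intro h; omega
  | one =>
    intro _
    have hall : ∀ v : Fin 2 → ZMod 1, addOrderOf v = 1 := fun v => by
      rw [Subsingleton.elim v 0, addOrderOf_zero]
    rw [Nat.card_congr (Equiv.subtypeUnivEquiv hall)]
    unfold dedekindPsi
    simp
  | coprime a b ha hb hco iha ihb =>
    intro _
    rw [cardCoprime (by omega) (by omega) hco]
    push_cast
    rw [iha (by omega), ihb (by omega), psiMul (by omega) (by omega) hco,
      Nat.totient_mul hco]
    push_cast
    ring

section
variable {V : Type*} [AddGroup V] [Finite V]

lemma myOrdCoe (K : AddSubgroup V) (x : V) (hx : x ∈ K) :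
    addOrderOf (⟨x, hx⟩ : K) = addOrderOf x := by
  have h := addOrderOf_injective K.subtype (by exact Subtype.coe_injective) ⟨x, hx⟩
  simpa using h

lemma myAddSubgroupEq {K H : AddSubgroup V} (h : K ≤ H) (hc : Nat.card H ≤ Nat.card K) :
    K = H := by
  apply SetLike.ext'
  apply Set.eq_of_subset_of_ncard_le h
  rw [← Nat.card_coe_set_eq, ← Nat.card_coe_set_eq]
  exact hc

lemma myZmultCyclic (w : V) : IsAddCyclic (AddSubgroup.zmultiples w) := by
  constructor
  refine ⟨⟨w, AddSubgroup.mem_zmultiples w⟩, fun x => ?_⟩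
  obtain ⟨z, hz⟩ := x.2
  exact ⟨z, Subtype.ext (by simpa using hz)⟩

end

lemma cardCsub (N : ℕ) (hN : 0 < N) :
    Nat.card {v : Fin 2 → ZMod N // addOrderOf v = N}
      = Nat.card {H : AddSubgroup (Fin 2 → ZMod N) //
          ∃ w, addOrderOf w = N ∧ H = AddSubgroup.zmultiples w} * N.totient := by
  classical
  haveI : NeZero N := ⟨hN.ne'⟩
  set V := Fin 2 → ZMod N with hV
  haveI : Finite (AddSubgroup V) :=
    Finite.of_injective (fun H : AddSubgroup V => (H : Set V)) SetLike.coe_injective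
  set Csub := {H : AddSubgroup V // ∃ w, addOrderOf w = N ∧ H = AddSubgroup.zmultiples w}
    with hCsub
  haveI : Fintype Csub := Fintype.ofFinite _
  set Prim := {v : V // addOrderOf v = N} with hPrim
  haveI : Fintype Prim := Fintype.ofFinite _
  set pr : Prim → Csub := fun v => ⟨AddSubgroup.zmultiples v.1, v.1, v.2, rfl⟩ with hpr
  have hfib : ∀ H : Csub, Nat.card {v : Prim // pr v = H} = N.totient := by
    rintro ⟨Hv, hHv⟩
    obtain ⟨w, hw, rfl⟩ := hHv
    set K := AddSubgroup.zmultiples w with hK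
    haveI : IsAddCyclic K := myZmultCyclic w
    have hcardK : Nat.card K = N := by rw [hK, Nat.card_zmultiples, hw]
    have e : {v : Prim // pr v = ⟨K, w, hw, rfl⟩} ≃ {x : K // addOrderOf x = N} := by
      refine ⟨fun v => ⟨⟨v.1.1, ?_⟩, ?_⟩, fun x => ⟨⟨x.1.1, ?_⟩, ?_⟩, ?_, ?_⟩
      · have h1 : AddSubgroup.zmultiples v.1.1 = K := congrArg Subtype.val v.2
        exact AddSubgroup.zmultiples_le.1 (le_of_eq h1) 
      · rw [myOrdCoe]
        exact v.1.2
      · rw [← myOrdCoe K _ x.1.2]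
        exact x.2
      · apply Subtype.ext
        show AddSubgroup.zmultiples x.1.1 = K
        apply myAddSubgroupEq
        · exact AddSubgroup.zmultiples_le.2 x.1.2
        · have hx1 : addOrderOf (x.1 : V) = N := by
            rw [← myOrdCoe K _ x.1.2]; exact x.2
          rw [Nat.card_zmultiples, Nat.card_zmultiples, hx1, hw]
      · intro v; apply Subtype.ext; apply Subtype.ext; rfl
      · intro x; apply Subtype.ext; apply Subtype.ext; rfl
    rw [Nat.card_congr e]
    rw [Nat.card_eq_fintype_card, Fintype.card_subtype]
    have hdvd : N ∣ Fintype.card K := by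
      rw [← Nat.card_eq_fintype_card, hcardK]
    exact IsAddCyclic.card_addOrderOf_eq_totient hdvd
  have hsig := Nat.card_congr (Equiv.sigmaFiberEquiv pr).symm
  rw [hsig, Nat.card_eq_fintype_card, Fintype.card_sigma]
  have : ∀ H : Csub, Fintype.card {v : Prim // pr v = H} = N.totient := by
    intro H; rw [← Nat.card_eq_fintype_card]; exact hfib H
  rw [Finset.sum_congr rfl (fun H _ => this H), Finset.sum_const, smul_eq_mul,
    Finset.card_univ, ← Nat.card_eq_fintype_card]

-- Bezout: if v has full order N then its coordinates generate the unit ideal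
lemma myBezout {N : ℕ} (hN : 0 < N) (v : Fin 2 → ZMod N) (hv : addOrderOf v = N) :
    ∃ x y : ZMod N, v 0 * x + v 1 * y = 1 := by
  haveI : NeZero N := ⟨hN.ne'⟩
  set a := (v 0).val with ha
  set b := (v 1).val with hb
  set d := Nat.gcd (Nat.gcd a b) N with hd
  have hdN : d ∣ N := Nat.gcd_dvd_right _ _
  have hda : d ∣ a := (Nat.gcd_dvd_left _ _).trans (Nat.gcd_dvd_left a b)
  have hdb : d ∣ b := (Nat.gcd_dvd_left _ _).trans (Nat.gcd_dvd_right a b)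
  have hd1 : d = 1 := by
    have hzero : (N / d) • v = 0 := by
      funext i
      show (N / d) • v i = 0
      have hdi : d ∣ (v i).val := by fin_cases i <;> assumption
      rw [nsmul_eq_mul]
      have hvi : v i = (((v i).val : ℕ) : ZMod N) := by
        rw [ZMod.natCast_val, ZMod.cast_id]
      rw [hvi, ← Nat.cast_mul, ZMod.natCast_eq_zero_iff]
      obtain ⟨e, he⟩ := hdi
      rw [he, ← mul_assoc, Nat.div_mul_cancel hdN]
      exact dvd_mul_right N e
    have hdvd := addOrderOf_dvd_of_nsmul_eq_zero hzero
    rw [hv] at hdvd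
    have hdpos : 0 < d := Nat.gcd_pos_of_pos_right _ hN
    have h1 : N / d ≤ N := Nat.div_le_self N d
    have h2 : 0 < N / d := Nat.div_pos (Nat.le_of_dvd hN hdN) hdpos
    have h3 : N ≤ N / d := Nat.le_of_dvd h2 hdvd
    have h4 : N / d = N := le_antisymm h1 h3
    have h5 := Nat.div_mul_cancel hdN
    rw [h4] at h5
    exact Nat.eq_of_mul_eq_mul_left hN (h5.trans (mul_one N).symm)
  -- now use Bezout twice
  have hb1 := Nat.gcd_eq_gcd_ab a b
  have hb2 := Nat.gcd_eq_gcd_ab (Nat.gcd a b) N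
  rw [← hd, hd1] at hb2
  -- cast hb2 to ZMod N
  have key : ((1 : ℤ) : ZMod N)
      = ((Nat.gcd a b : ℤ) : ZMod N) * ((Nat.gcdA (Nat.gcd a b) N : ℤ) : ZMod N) := by
    rw [← Int.cast_mul]
    conv_lhs => rw [show ((1:ℤ) : ZMod N) = (((Nat.gcd a b : ℤ) * Nat.gcdA (Nat.gcd a b) N
      + (N : ℤ) * Nat.gcdB (Nat.gcd a b) N : ℤ) : ZMod N) by rw [← hb2]; norm_num]
    push_cast
    simp [ZMod.natCast_self]
  have hva : ((a : ℤ) : ZMod N) = v 0 := by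
    rw [ha]; push_cast [ZMod.natCast_val, ZMod.cast_id]; rfl
  have hvb : ((b : ℤ) : ZMod N) = v 1 := by
    rw [hb]; push_cast [ZMod.natCast_val, ZMod.cast_id]; rfl
  refine ⟨((Nat.gcdA a b : ℤ) : ZMod N) * ((Nat.gcdA (Nat.gcd a b) N : ℤ) : ZMod N),
    ((Nat.gcdB a b : ℤ) : ZMod N) * ((Nat.gcdA (Nat.gcd a b) N : ℤ) : ZMod N), ?_⟩
  have hgab : ((Nat.gcd a b : ℤ) : ZMod N) = v 0 * ((Nat.gcdA a b : ℤ) : ZMod N)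
      + v 1 * ((Nat.gcdB a b : ℤ) : ZMod N) := by
    rw [← hva, ← hvb]
    rw [show ((Nat.gcd a b : ℤ) : ZMod N) = (((a : ℤ) * Nat.gcdA a b + (b : ℤ) * Nat.gcdB a b : ℤ) : ZMod N) by rw [← hb1]]
    push_cast
    ring
  have := key
  rw [hgab] at this
  rw [show ((1:ℤ) : ZMod N) = (1 : ZMod N) by norm_num] at this
  rw [this]
  ring

lemma myGLtrans {N : ℕ} (hN : 0 < N) (v : Fin 2 → ZMod N) (hv : addOrderOf v = N) :
    ∃ g : GL (Fin 2) (ZMod N),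
      ((g : Matrix (Fin 2) (Fin 2) (ZMod N)).mulVecLin) ![1, 0] = v := by
  obtain ⟨x, y, hxy⟩ := myBezout hN v hv
  set M : Matrix (Fin 2) (Fin 2) (ZMod N) := !![v 0, -y; v 1, x] with hM
  have hdet : M.det = 1 := by
    rw [hM, Matrix.det_fin_two_of]
    ring_nf
    ring_nf at hxy
    linear_combination hxy
  haveI : Invertible M := M.invertibleOfIsUnitDet (by rw [hdet]; exact isUnit_one)
  refine ⟨unitOfInvertible M, ?_⟩
  have hcoe : ((unitOfInvertible M : GL (Fin 2) (ZMod N)) :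
      Matrix (Fin 2) (Fin 2) (ZMod N)) = M := rfl
  rw [hcoe]
  funext i
  fin_cases i <;>
    simp [hM, Matrix.mulVecLin_apply, Matrix.mulVec, dotProduct, Fin.sum_univ_two]

/-- If `Φ` is a cyclic subgroup of order `N` of `(ℤ/Nℤ)²` and `B` is the size of
its orbit under a subgroup `G ≤ GL₂(ℤ/Nℤ)`, then `ψ(N) ≤ B · [GL₂(ℤ/Nℤ) : G]`. -/
theorem psi_le_orbit_mul_index (N : ℕ) (hN : 0 < N)
    (G : Subgroup (GL (Fin 2) (ZMod N)))
    (Φ : AddSubgroup (Fin 2 → ZMod N))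
    (hcyc : ∃ v, Φ = AddSubgroup.zmultiples v)
    (hord : Nat.card Φ = N)
    (B : ℕ)
    (hB : B = Nat.card {H : AddSubgroup (Fin 2 → ZMod N) //
        ∃ g ∈ G, H = Φ.map
          (Matrix.mulVecLin ((g : GL (Fin 2) (ZMod N)) :
            Matrix (Fin 2) (Fin 2) (ZMod N))).toAddMonoidHom}) :
    dedekindPsi N ≤ (B : ℝ) * (G.index : ℝ) := by
  classical
  haveI : NeZero N := ⟨hN.ne'⟩
  haveI : Finite (AddSubgroup (Fin 2 → ZMod N)) :=
    Finite.of_injective (fun H : AddSubgroup (Fin 2 → ZMod N) => (H : Set (Fin 2 → ZMod N)))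
      SetLike.coe_injective
  obtain ⟨v, rfl⟩ := hcyc
  rw [Nat.card_zmultiples] at hord
  set f : GL (Fin 2) (ZMod N) → AddSubgroup (Fin 2 → ZMod N) := fun g =>
    (AddSubgroup.zmultiples v).map
      (Matrix.mulVecLin ((g : GL (Fin 2) (ZMod N)) :
        Matrix (Fin 2) (Fin 2) (ZMod N))).toAddMonoidHom with hf
  -- `f` of a product
  have hfmul : ∀ g h : GL (Fin 2) (ZMod N), f (g * h) =
      (f h).map (Matrix.mulVecLin ((g : GL (Fin 2) (ZMod N)) :
        Matrix (Fin 2) (Fin 2) (ZMod N))).toAddMonoidHom := by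
    intro g h
    rw [hf]
    simp only []
    rw [AddSubgroup.map_map]
    congr 1
    rw [Units.val_mul, Matrix.mulVecLin_mul]
    rfl
  -- `f g = zmultiples (g v)`
  have hfz : ∀ g : GL (Fin 2) (ZMod N), f g = AddSubgroup.zmultiples
      ((Matrix.mulVecLin ((g : GL (Fin 2) (ZMod N)) :
        Matrix (Fin 2) (Fin 2) (ZMod N))) v) := by
    intro g
    rw [hf]
    simp only []
    rw [AddMonoidHom.map_zmultiples]
    rfl
  set R := {H : AddSubgroup (Fin 2 → ZMod N) // ∃ g : GL (Fin 2) (ZMod N), H = f g} with hR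
  set Ω := {H : AddSubgroup (Fin 2 → ZMod N) // ∃ g ∈ G, H = f g} with hΩ
  set Csub := {H : AddSubgroup (Fin 2 → ZMod N) //
      ∃ w, addOrderOf w = N ∧ H = AddSubgroup.zmultiples w} with hCs
  -- Step α : Csub injects into R
  have stepA : Nat.card Csub ≤ Nat.card R := by
    have hmem : ∀ H : Csub, ∃ g : GL (Fin 2) (ZMod N), H.1 = f g := by
      rintro ⟨Hv, w, hw, rfl⟩
      obtain ⟨g1, hg1⟩ := myGLtrans hN v hord
      obtain ⟨g2, hg2⟩ := myGLtrans hN w hw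
      refine ⟨g2 * g1⁻¹, ?_⟩
      have hinv : (Matrix.mulVecLin (((g1⁻¹ : GL (Fin 2) (ZMod N)) :
          Matrix (Fin 2) (Fin 2) (ZMod N)))) v = ![1, 0] := by
        rw [← hg1]
        have : ((g1⁻¹ : GL (Fin 2) (ZMod N)) : Matrix (Fin 2) (Fin 2) (ZMod N)).mulVecLin
            ∘ₗ ((g1 : GL (Fin 2) (ZMod N)) : Matrix (Fin 2) (Fin 2) (ZMod N)).mulVecLin
            = LinearMap.id := by
          rw [← Matrix.mulVecLin_mul]
          rw [← Units.val_mul, inv_mul_cancel]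
          simp
        calc ((g1⁻¹:GL (Fin 2) (ZMod N)) : Matrix (Fin 2) (Fin 2) (ZMod N)).mulVecLin
              (((g1:GL (Fin 2) (ZMod N)) : Matrix (Fin 2) (Fin 2) (ZMod N)).mulVecLin ![1,0])
            = (((g1⁻¹:GL (Fin 2) (ZMod N)) : Matrix (Fin 2) (Fin 2) (ZMod N)).mulVecLin
              ∘ₗ ((g1:GL (Fin 2) (ZMod N)) : Matrix (Fin 2) (Fin 2) (ZMod N)).mulVecLin) ![1,0] := rfl
          _ = ![1,0] := by rw [this]; rfl
      have hvw : (Matrix.mulVecLin (((g2 * g1⁻¹ : GL (Fin 2) (ZMod N)) :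
          Matrix (Fin 2) (Fin 2) (ZMod N)))) v = w := by
        rw [Units.val_mul, Matrix.mulVecLin_mul, LinearMap.comp_apply, hinv, hg2]
      rw [hfz, hvw]
    have hinj : Function.Injective (fun H : Csub => (⟨H.1, hmem H⟩ : R)) := by
      intro H1 H2 h12
      rw [Subtype.mk_eq_mk] at h12
      exact Subtype.ext h12
    exact Nat.card_le_card_of_injective _ hinj
  -- Step β : R is covered by index * B
  have stepB : Nat.card R ≤ G.index * B := by
    set Q := GL (Fin 2) (ZMod N) ⧸ G with hQ
    have hΨ : ∀ (c : Q) (K : Ω), ∃ g : GL (Fin 2) (ZMod N),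
        K.1.map (Matrix.mulVecLin ((c.out : GL (Fin 2) (ZMod N)) :
          Matrix (Fin 2) (Fin 2) (ZMod N))).toAddMonoidHom = f g := by
      rintro c ⟨Kv, g, hg, rfl⟩
      exact ⟨c.out * g, (hfmul c.out g).symm⟩
    set Ψ : Q × Ω → R := fun p => ⟨_, hΨ p.1 p.2⟩ with hΨdef
    have hsurj : Function.Surjective Ψ := by
      rintro ⟨Hv, g, rfl⟩
      set c : Q := QuotientGroup.mk g with hc
      have hout : (c.out)⁻¹ * g ∈ G := by
        rw [← QuotientGroup.eq]
        exact c.out_eq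
      refine ⟨⟨c, ⟨f ((c.out)⁻¹ * g), (c.out)⁻¹ * g, hout, rfl⟩⟩, ?_⟩
      apply Subtype.ext
      show (f ((c.out)⁻¹ * g)).map _ = f g
      rw [← hfmul]
      congr 1
      group
    calc Nat.card R ≤ Nat.card (Q × Ω) := Nat.card_le_card_of_surjective Ψ hsurj
      _ = Nat.card Q * Nat.card Ω := Nat.card_prod _ _
      _ = G.index * B := by rw [hB, Subgroup.index_eq_card]
  -- Step γ : dedekindPsi N = Nat.card Csub
  have stepC : dedekindPsi N = (Nat.card Csub : ℝ) := by
    have h1 := cardOrdEq N hN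
    have h2 := cardCsub N hN
    rw [h2, Nat.cast_mul] at h1
    have htot : (N.totient : ℝ) ≠ 0 := by
      have := Nat.totient_pos.mpr hN
      positivity
    exact (mul_right_cancel₀ htot h1).symm
  rw [stepC]
  have hfin : Nat.card Csub ≤ B * G.index :=
    le_trans stepA (le_trans stepB (le_of_eq (Nat.mul_comm _ _)))
  exact_mod_cast hfin
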